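/- arXiv:1211.4230 — 2 statements merged into one kernel-verified Lean document; each statement's English description precedes it below -/
import Mathlib

section
/- Assume that Ω^1_{R/K} is a free R-module with basis dx^1,…,dx^d. For g ∈ R write Ĩ(g) := Σ_i ι(g_i) t^i ∈ R^coord[[t^1,…,t^d]], and let J be the d×d matrix over R^coord[[t^1,…,t^d]] with entries J^a_b := ∂_{t^b} Ĩ(x^a). Then: (i) J is an invertible matrix over R^coord[[t^1,…,t^d]]; and (ii) its inverse satisfies, for every f ∈ R and every a ∈ {1,…,d}: Σ_{b=1}^d (J^{-1})^b_a · ∂_{t^b} Ĩ(f) = Ĩ(∂_{x^a} f). -/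
namespace Paper

/-- Multi-indices: finitely supported functions `Fin d → ℕ`. -/
abbrev MIdx (d : ℕ) := Fin d →₀ ℕ

/-- The length `|i|` of a multi-index. -/
def deg {d : ℕ} (i : MIdx d) : ℕ := i.sum fun _ n => n

variable (K R : Type) [Field K] [CharZero K] [CommRing R] [Algebra K R]

/-- The defining relations of the algebra `R^𝐝`. -/
def relSet (d : ℕ) : Set (MvPolynomial (R × MIdx d) R) :=
  {p | (∃ f g : R, ∃ i : MIdx d,
          p = MvPolynomial.X (f + g, i) - MvPolynomial.X (f, i) - MvPolynomial.X (g, i)) ∨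
       (∃ f g : R, ∃ i : MIdx d,
          p = MvPolynomial.X (f * g, i) -
            ∑ q ∈ Finset.HasAntidiagonal.antidiagonal i, MvPolynomial.X (f, q.1) * MvPolynomial.X (g, q.2)) ∨
       (∃ f : R, p = MvPolynomial.X (f, (0 : MIdx d)) - MvPolynomial.C f) ∨
       (∃ (c : K) (i : MIdx d), 1 ≤ deg i ∧ p = MvPolynomial.X (algebraMap K R c, i))}

/-- The commutative `R`-algebra `R^𝐝` generated by the symbols `f_i`. -/
def Rd (d : ℕ) : Type :=
  MvPolynomial (R × MIdx d) R ⧸ Ideal.span (relSet K R d)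

noncomputable instance (d : ℕ) : CommRing (Rd K R d) := Ideal.Quotient.commRing _
noncomputable instance (d : ℕ) : Algebra R (Rd K R d) := Ideal.Quotient.algebra R
noncomputable instance (d : ℕ) : Algebra K (Rd K R d) := Ideal.Quotient.algebra K

/-- The generator `f_i` of `R^𝐝`. -/
noncomputable def gen {d : ℕ} (f : R) (i : MIdx d) : Rd K R d :=
  Ideal.Quotient.mk (Ideal.span (relSet K R d)) (MvPolynomial.X (f, i))

/-- The Taylor series `I(f) = Σ_i f_i t^i ∈ R^𝐝[[t^1,…,t^d]]`. -/
noncomputable def Ifun {d : ℕ} (f : R) : MvPowerSeries (Fin d) (Rd K R d) :=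
  fun i => gen K R f i

end Paper

namespace Paper

variable (K R : Type) [Field K] [CharZero K] [CommRing R] [Algebra K R]

lemma deg_single {d : ℕ} (c : Fin d) : deg (Finsupp.single c (1 : ℕ)) = 1 := by
  simp [deg]

/-- The determinant `det(x^a_{(b)}) ∈ R^𝐝`. -/
noncomputable def detX (d : ℕ) (x : Fin d → R) : Rd K R d :=
  Matrix.det (Matrix.of fun a c => gen K R (x a) (Finsupp.single c 1))

/-- `R^coord`: the localization of `R^𝐝` at `det(x^a_{(b)})`. -/
abbrev Rcoord (d : ℕ) (x : Fin d → R) : Type :=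
  Localization.Away (detX K R d x)

/-- The localization map `ι : R^𝐝 → R^coord`. -/
noncomputable def locMap (d : ℕ) (x : Fin d → R) : Rd K R d →+* Rcoord K R d x :=
  algebraMap _ _

end Paper

namespace Paper

/-- The formal partial derivative `∂_{t^c}` on multivariate power series,
defined coefficientwise. -/
noncomputable def ptderiv {A : Type} [CommRing A] {d : ℕ} (c : Fin d)
    (F : MvPowerSeries (Fin d) A) : MvPowerSeries (Fin d) A :=
  fun k => (k c + 1 : ℕ) • MvPowerSeries.coeff (k + Finsupp.single c 1) F

variable (K R : Type) [Field K] [CharZero K] [CommRing R] [Algebra K R]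

/-- The series `Ĩ(g) = Σ_i ι(g_i) t^i` over `R^coord`. -/
noncomputable def Itilde (d : ℕ) (x : Fin d → R) (g : R) :
    MvPowerSeries (Fin d) (Rcoord K R d x) :=
  fun i => locMap K R d x (gen K R g i)

/-- The Jacobian matrix `J = (∂_{t^b} Ĩ(x^a))` over `R^coord[[t]]`. -/
noncomputable def Jmat (d : ℕ) (x : Fin d → R) :
    Matrix (Fin d) (Fin d) (MvPowerSeries (Fin d) (Rcoord K R d x)) :=
  Matrix.of fun a c => ptderiv c (Itilde K R d x (x a))

end Paper

namespace Paper

open Finset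

set_option maxHeartbeats 1000000
set_option synthInstance.maxHeartbeats 400000

variable (K R : Type) [Field K] [CharZero K] [CommRing R] [Algebra K R]

lemma mk_rel {d : ℕ} {p : MvPolynomial (R × MIdx d) R} (hp : p ∈ relSet K R d) :
    Ideal.Quotient.mk (Ideal.span (relSet K R d)) p = 0 :=
  Ideal.Quotient.eq_zero_iff_mem.2 (Ideal.subset_span hp)

lemma gen_add {d : ℕ} (f g : R) (i : MIdx d) :
    gen K R (f + g) i = gen K R f i + gen K R g i := by
  have h := mk_rel K R (Or.inl ⟨f, g, i, rfl⟩)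
  simp only [map_sub] at h
  rw [sub_sub, sub_eq_zero] at h
  exact h

lemma gen_mul {d : ℕ} (f g : R) (i : MIdx d) :
    gen K R (f * g) i = ∑ q ∈ antidiagonal i, gen K R f q.1 * gen K R g q.2 := by
  have h := mk_rel K R (d := d) (Or.inr (Or.inl ⟨f, g, i, rfl⟩))
  simp only [map_sub, map_sum, map_mul, sub_eq_zero] at h
  exact h

lemma gen_zero_idx {d : ℕ} (f : R) :
    gen K R f (0 : MIdx d) = algebraMap R (Rd K R d) f := by
  have h := mk_rel K R (d := d) (Or.inr (Or.inr (Or.inl ⟨f, rfl⟩)))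
  simp only [map_sub, sub_eq_zero] at h
  unfold gen
  rw [h]
  rfl

lemma gen_algebraMap {d : ℕ} (c : K) {i : MIdx d} (hi : 1 ≤ deg i) :
    gen K R (algebraMap K R c) i = 0 :=
  mk_rel K R (Or.inr (Or.inr (Or.inr ⟨c, i, hi, rfl⟩)))

lemma deg_eq_zero_iff {d : ℕ} {i : MIdx d} : deg i = 0 ↔ i = 0 := by
  constructor
  · intro h
    ext a
    simp only [Finsupp.coe_zero, Pi.zero_apply]
    by_contra ha
    have hmem : a ∈ i.support := Finsupp.mem_support_iff.2 ha
    have h2 : i a ≤ ∑ b ∈ i.support, i b :=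
      Finset.single_le_sum (f := fun b => i b) (fun _ _ => Nat.zero_le _) hmem
    have h3 : deg i = ∑ b ∈ i.support, i b := rfl
    omega
  · rintro rfl; simp [deg]

lemma gen_algebraMap' {d : ℕ} (c : K) {i : MIdx d} (hi : i ≠ 0) :
    gen K R (algebraMap K R c) i = 0 := by
  apply gen_algebraMap
  rcases Nat.eq_zero_or_pos (deg i) with h | h
  · exact absurd (deg_eq_zero_iff.mp h) hi
  · exact h

end Paper
namespace Paper

open Finset

section PtDeriv

variable {A : Type} [CommRing A] {d : ℕ}

lemma coeff_ptderiv (c : Fin d) (F : MvPowerSeries (Fin d) A) (k : MIdx d) :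
    MvPowerSeries.coeff k (ptderiv c F)
      = (k c + 1 : ℕ) • MvPowerSeries.coeff (k + Finsupp.single c 1) F := rfl

lemma ptderiv_add (c : Fin d) (F G : MvPowerSeries (Fin d) A) :
    ptderiv c (F + G) = ptderiv c F + ptderiv c G := by
  ext k
  simp [coeff_ptderiv, smul_add]

lemma ptderiv_one (c : Fin d) : ptderiv c (1 : MvPowerSeries (Fin d) A) = 0 := by
  classical
  ext k
  have hne : k + Finsupp.single c 1 ≠ 0 := by
    intro h
    have := congrArg (fun m : MIdx d => m c) h
    simp [Finsupp.add_apply, Finsupp.single_eq_same] at this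
  simp [coeff_ptderiv, MvPowerSeries.coeff_one, hne]

lemma ptderiv_C_mul (c : Fin d) (a : A) (F : MvPowerSeries (Fin d) A) :
    ptderiv c (MvPowerSeries.C a * F) = MvPowerSeries.C a * ptderiv c F := by
  ext k
  simp only [coeff_ptderiv, MvPowerSeries.coeff_C_mul]
  rw [mul_smul_comm]

lemma sum_antidiagonal_shift (c : Fin d) (k : MIdx d) (H : MIdx d → MIdx d → A) :
    ∑ p ∈ antidiagonal (k + Finsupp.single c 1), ((p.1 : MIdx d) c) • H p.1 p.2
      = ∑ p ∈ antidiagonal k, ((p.1 : MIdx d) c + 1) • H (p.1 + Finsupp.single c 1) p.2 := by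
  classical
  rw [← Finset.sum_filter_of_ne
      (p := fun p : MIdx d × MIdx d => p.1 c ≠ 0)
      (fun p _ hne h0 => hne (by rw [h0, zero_smul]))]
  refine Finset.sum_bij' (fun p _ => (p.1 - Finsupp.single c 1, p.2))
    (fun q _ => (q.1 + Finsupp.single c 1, q.2)) ?_ ?_ ?_ ?_ ?_
  · rintro ⟨u, v⟩ hp
    rw [Finset.mem_filter, Finset.HasAntidiagonal.mem_antidiagonal] at hp
    rw [Finset.HasAntidiagonal.mem_antidiagonal]
    have h1 : u c ≠ 0 := hp.2
    calc u - Finsupp.single c 1 + v = u + v - Finsupp.single c 1 :=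
          Finsupp.sub_single_one_add h1
      _ = k + Finsupp.single c 1 - Finsupp.single c 1 := by rw [hp.1]
      _ = k := by rw [add_tsub_cancel_right]
  · rintro ⟨u, v⟩ hq
    rw [Finset.HasAntidiagonal.mem_antidiagonal] at hq
    rw [Finset.mem_filter, Finset.HasAntidiagonal.mem_antidiagonal]
    constructor
    · rw [add_right_comm, hq]
    · simp [Finsupp.add_apply, Finsupp.single_eq_same]
  · rintro ⟨u, v⟩ hp
    rw [Finset.mem_filter, Finset.HasAntidiagonal.mem_antidiagonal] at hp
    have hle : Finsupp.single c 1 ≤ u :=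
      Finsupp.single_le_iff.mpr (Nat.one_le_iff_ne_zero.mpr hp.2)
    simp only [Prod.mk.injEq]
    exact ⟨tsub_add_cancel_of_le hle, trivial⟩
  · rintro ⟨u, v⟩ _
    simp only [Prod.mk.injEq]
    exact ⟨by rw [add_tsub_cancel_right], trivial⟩
  · rintro ⟨u, v⟩ hp
    rw [Finset.mem_filter, Finset.HasAntidiagonal.mem_antidiagonal] at hp
    have hle : Finsupp.single c 1 ≤ u :=
      Finsupp.single_le_iff.mpr (Nat.one_le_iff_ne_zero.mpr hp.2)
    have h1 : ((u - Finsupp.single c 1 : MIdx d)) c + 1 = u c := by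
      rw [Finsupp.tsub_apply, Finsupp.single_eq_same]
      have : 1 ≤ u c := Nat.one_le_iff_ne_zero.mpr hp.2
      omega
    rw [tsub_add_cancel_of_le hle, h1]

lemma ptderiv_mul (c : Fin d) (F G : MvPowerSeries (Fin d) A) :
    ptderiv c (F * G) = F * ptderiv c G + ptderiv c F * G := by
  classical
  ext k
  rw [map_add, coeff_ptderiv, MvPowerSeries.coeff_mul, MvPowerSeries.coeff_mul,
    MvPowerSeries.coeff_mul, Finset.smul_sum]
  have key : ∀ p ∈ antidiagonal (k + Finsupp.single c 1),
      (k c + 1) • (MvPowerSeries.coeff p.1 F * MvPowerSeries.coeff p.2 G)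
        = (p.1 c) • (MvPowerSeries.coeff p.1 F * MvPowerSeries.coeff p.2 G)
          + (p.2 c) • (MvPowerSeries.coeff p.1 F * MvPowerSeries.coeff p.2 G) := by
    intro p hp
    rw [Finset.HasAntidiagonal.mem_antidiagonal] at hp
    have hsum : p.1 c + p.2 c = k c + 1 := by
      have := congrArg (fun m : MIdx d => m c) hp
      simpa [Finsupp.add_apply, Finsupp.single_eq_same] using this
    rw [← add_smul, hsum]
  rw [Finset.sum_congr rfl key, Finset.sum_add_distrib, add_comm]
  congr 1
  · -- second-factor part
    rw [Finsupp.sum_antidiagonal_swap (k + Finsupp.single c 1)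
        (fun u v => (v c) • (MvPowerSeries.coeff u F * MvPowerSeries.coeff v G))]
    rw [sum_antidiagonal_shift c k
        (fun u v => MvPowerSeries.coeff v F * MvPowerSeries.coeff u G)]
    rw [Finsupp.sum_antidiagonal_swap k
        (fun u v => (u c + 1) • (MvPowerSeries.coeff v F
          * MvPowerSeries.coeff (u + Finsupp.single c 1) G))]
    refine Finset.sum_congr rfl fun p _ => ?_
    rw [coeff_ptderiv, mul_smul_comm]
  · rw [sum_antidiagonal_shift c k
        (fun u v => MvPowerSeries.coeff u F * MvPowerSeries.coeff v G)]
    refine Finset.sum_congr rfl fun p _ => ?_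
    rw [coeff_ptderiv, smul_mul_assoc]

end PtDeriv

end Paper
namespace Paper

open Finset

variable (K R : Type) [Field K] [CharZero K] [CommRing R] [Algebra K R]

lemma coeff_Itilde (d : ℕ) (x : Fin d → R) (g : R) (k : MIdx d) :
    MvPowerSeries.coeff k (Itilde K R d x g)
      = locMap K R d x (gen K R g k) := rfl

lemma Itilde_add (d : ℕ) (x : Fin d → R) (f g : R) :
    Itilde K R d x (f + g) = Itilde K R d x f + Itilde K R d x g := by
  ext k
  simp [coeff_Itilde, gen_add, map_add]

lemma Itilde_mul (d : ℕ) (x : Fin d → R) (f g : R) :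
    Itilde K R d x (f * g) = Itilde K R d x f * Itilde K R d x g := by
  classical
  ext k
  rw [MvPowerSeries.coeff_mul, coeff_Itilde, gen_mul, map_sum]
  exact Finset.sum_congr rfl fun p _ => by rw [map_mul]; rfl

lemma Itilde_one (d : ℕ) (x : Fin d → R) :
    Itilde K R d x (1 : R) = 1 := by
  classical
  ext k
  rw [MvPowerSeries.coeff_one, coeff_Itilde]
  by_cases hk : k = 0
  · subst hk
    rw [if_pos rfl, gen_zero_idx, map_one, map_one]
  · rw [if_neg hk]
    have h1 : (1 : R) = algebraMap K R 1 := by rw [map_one]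
    rw [h1, gen_algebraMap' K R _ hk, map_zero]

/-- `Ĩ` as a ring homomorphism. -/
noncomputable def ItildeHom (d : ℕ) (x : Fin d → R) :
    R →+* MvPowerSeries (Fin d) (Rcoord K R d x) where
  toFun g := Itilde K R d x g
  map_one' := Itilde_one K R d x
  map_mul' := Itilde_mul K R d x
  map_zero' := by
    have h := Itilde_add K R d x 0 0
    rw [add_zero] at h
    exact (left_eq_add.mp h)
  map_add' := Itilde_add K R d x

lemma algebraMap_Rd (d : ℕ) (c : K) :
    algebraMap R (Rd K R d) (algebraMap K R c) = algebraMap K (Rd K R d) c := by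
  show Ideal.Quotient.mk _ (algebraMap R (MvPolynomial (R × MIdx d) R) (algebraMap K R c))
      = Ideal.Quotient.mk _ (algebraMap K (MvPolynomial (R × MIdx d) R) c)
  rw [IsScalarTower.algebraMap_apply K R (MvPolynomial (R × MIdx d) R)]

lemma Itilde_algebraMap (d : ℕ) (x : Fin d → R) (c : K) :
    Itilde K R d x (algebraMap K R c)
      = MvPowerSeries.C (algebraMap K (Rcoord K R d x) c) := by
  classical
  ext k
  rw [MvPowerSeries.coeff_C, coeff_Itilde]
  by_cases hk : k = 0
  · subst hk
    rw [if_pos rfl, gen_zero_idx, algebraMap_Rd]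
    exact (IsScalarTower.algebraMap_apply K (Rd K R d) (Rcoord K R d x) c).symm
  · rw [if_neg hk, gen_algebraMap' K R _ hk, map_zero]

lemma chain_rule (d : ℕ) (x : Fin d → R) (pd : Fin d → R → R)
    (hpd : ∀ g : R, KaehlerDifferential.D K R g =
      ∑ a : Fin d, pd a g • KaehlerDifferential.D K R (x a)) (c : Fin d) (f : R) :
    ptderiv c (Itilde K R d x f)
      = ∑ a : Fin d, Itilde K R d x (pd a f) * ptderiv c (Itilde K R d x (x a)) := by
  classical
  letI alg : Algebra R (MvPowerSeries (Fin d) (Rcoord K R d x)) :=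
    (ItildeHom K R d x).toAlgebra
  letI modRS : Module R (MvPowerSeries (Fin d) (Rcoord K R d x)) := Algebra.toModule
  have halg : ∀ r : R,
      algebraMap R (MvPowerSeries (Fin d) (Rcoord K R d x)) r = Itilde K R d x r :=
    fun r => rfl
  have hsmulR : ∀ (r : R) (F : MvPowerSeries (Fin d) (Rcoord K R d x)),
      r • F = Itilde K R d x r * F := fun r F => rfl
  have hsmulK : ∀ (r : K) (F : MvPowerSeries (Fin d) (Rcoord K R d x)),
      r • F = MvPowerSeries.C (algebraMap K (Rcoord K R d x) r) * F := by
    intro r F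
    ext k
    rw [MvPowerSeries.coeff_C_mul]
    exact Algebra.smul_def r (F k)
  haveI tow : IsScalarTower K R (MvPowerSeries (Fin d) (Rcoord K R d x)) := by
    refine IsScalarTower.of_algebraMap_eq' ?_
    refine RingHom.ext fun cK => ?_
    rw [RingHom.comp_apply, halg, Itilde_algebraMap, MvPowerSeries.algebraMap_apply]
  let L : R →ₗ[K] MvPowerSeries (Fin d) (Rcoord K R d x) :=
    { toFun := fun g => ptderiv c (Itilde K R d x g)
      map_add' := fun g h => by
        show ptderiv c (Itilde K R d x (g + h))
          = ptderiv c (Itilde K R d x g) + ptderiv c (Itilde K R d x h)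
        rw [Itilde_add, ptderiv_add]
      map_smul' := fun r g => by
        simp only [RingHom.id_apply]
        show ptderiv c (Itilde K R d x (r • g)) = r • ptderiv c (Itilde K R d x g)
        rw [Algebra.smul_def, Itilde_mul, Itilde_algebraMap, ptderiv_C_mul, hsmulK] }
  let D : Derivation K R (MvPowerSeries (Fin d) (Rcoord K R d x)) :=
    { toLinearMap := L
      map_one_eq_zero' := by
        show ptderiv c (Itilde K R d x 1) = 0
        rw [Itilde_one, ptderiv_one]
      leibniz' := fun a b => by
        show ptderiv c (Itilde K R d x (a * b)) = _
        rw [Itilde_mul, ptderiv_mul]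
        show _ = Itilde K R d x a * ptderiv c (Itilde K R d x b)
          + Itilde K R d x b * ptderiv c (Itilde K R d x a)
        ring }
  have hDf : ∀ g : R, D g = ptderiv c (Itilde K R d x g) := fun g => rfl
  have h1 : D f = ∑ a : Fin d, pd a f • D (x a) := by
    conv_lhs => rw [← D.liftKaehlerDifferential_comp_D f]
    rw [hpd f, map_sum]
    refine Finset.sum_congr rfl fun a _ => ?_
    rw [map_smul, D.liftKaehlerDifferential_comp_D]
  rw [← hDf f, h1]
  refine Finset.sum_congr rfl fun a _ => ?_
  rw [hDf, hsmulR]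

end Paper
/-- The Jacobian matrix `J = (∂_{t^b} Ĩ(x^a))` is invertible over
`R^coord[[t]]` and its inverse satisfies
`Σ_b (J⁻¹)^b_a ∂_{t^b} Ĩ(f) = Ĩ(∂_{x^a} f)`. -/
theorem statement11 (K R : Type) [Field K] [CharZero K] [CommRing R] [Algebra K R]
    (d : ℕ) (hd : 1 ≤ d) (x : Fin d → R)
    (b : Module.Basis (Fin d) R (KaehlerDifferential K R))
    (hb : ∀ a : Fin d, b a = KaehlerDifferential.D K R (x a))
    (pd : Fin d → R → R)
    (hpd : ∀ g : R, KaehlerDifferential.D K R g =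
      ∑ a : Fin d, pd a g • KaehlerDifferential.D K R (x a)) :
    IsUnit (Paper.Jmat K R d x) ∧
    ∀ (f : R) (a : Fin d),
      ∑ c : Fin d,
        (Paper.Jmat K R d x)⁻¹ c a * Paper.ptderiv c (Paper.Itilde K R d x f) =
        Paper.Itilde K R d x (pd a f) := by
  classical
  have hchain : ∀ (f : R) (c : Fin d),
      Paper.ptderiv c (Paper.Itilde K R d x f)
        = ∑ b : Fin d, Paper.Itilde K R d x (pd b f) * Paper.Jmat K R d x b c :=
    fun f c => Paper.chain_rule K R d x pd hpd c f
  have hdetu : IsUnit (Paper.Jmat K R d x).det := by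
    rw [MvPowerSeries.isUnit_iff_constantCoeff]
    have h1 : (MvPowerSeries.constantCoeff (σ := Fin d) (R := Paper.Rcoord K R d x))
          (Paper.Jmat K R d x).det
        = ((Paper.Jmat K R d x).map
            (MvPowerSeries.constantCoeff (σ := Fin d) (R := Paper.Rcoord K R d x))).det :=
      RingHom.map_det _ _
    have h2 : (Paper.Jmat K R d x).map
          (MvPowerSeries.constantCoeff (σ := Fin d) (R := Paper.Rcoord K R d x))
        = (Matrix.of fun a c => Paper.gen K R (x a) (Finsupp.single c 1)).map
            (Paper.locMap K R d x) := by
      ext a c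
      show MvPowerSeries.constantCoeff (σ := Fin d) (R := Paper.Rcoord K R d x)
          (Paper.ptderiv c (Paper.Itilde K R d x (x a))) = _
      rw [← MvPowerSeries.coeff_zero_eq_constantCoeff_apply, Paper.coeff_ptderiv]
      have h0 : ((0 : Paper.MIdx d)) c = 0 := rfl
      rw [h0, zero_add, zero_add, one_nsmul]
      rfl
    have h3 : ((Matrix.of fun a c => Paper.gen K R (x a) (Finsupp.single c 1)).map
          (Paper.locMap K R d x)).det
        = Paper.locMap K R d x (Paper.detX K R d x) := (RingHom.map_det _ _).symm
    rw [h1, h2, h3]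
    exact IsLocalization.Away.algebraMap_isUnit _
  have hJ : IsUnit (Paper.Jmat K R d x) := (Matrix.isUnit_iff_isUnit_det _).mpr hdetu
  refine ⟨hJ, fun f a => ?_⟩
  have hmul : ∀ b : Fin d, ∑ c : Fin d,
      Paper.Jmat K R d x b c * (Paper.Jmat K R d x)⁻¹ c a
        = (1 : Matrix (Fin d) (Fin d) (MvPowerSeries (Fin d) (Paper.Rcoord K R d x))) b a := by
    intro b
    rw [← Matrix.mul_apply, Matrix.mul_nonsing_inv _ hdetu]
  calc
    ∑ c : Fin d, (Paper.Jmat K R d x)⁻¹ c a * Paper.ptderiv c (Paper.Itilde K R d x f)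
        = ∑ c : Fin d, ∑ b : Fin d, Paper.Itilde K R d x (pd b f)
            * (Paper.Jmat K R d x b c * (Paper.Jmat K R d x)⁻¹ c a) := by
          refine Finset.sum_congr rfl fun c _ => ?_
          rw [hchain f c, Finset.mul_sum]
          exact Finset.sum_congr rfl fun b _ => by ring
    _ = ∑ b : Fin d, Paper.Itilde K R d x (pd b f)
            * ∑ c : Fin d, Paper.Jmat K R d x b c * (Paper.Jmat K R d x)⁻¹ c a := by
          rw [Finset.sum_comm]
          exact Finset.sum_congr rfl fun b _ => (Finset.mul_sum _ _ _).symm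
    _ = Paper.Itilde K R d x (pd a f) := by
          simp only [hmul, Matrix.one_apply]
          simp
end

section
/- Let n ≥ 3, let W_n be the wheel graph on Fin (n+1) with hub h := Fin.last n, and let r be an orientation of W_n such that every vertex other than h has at most one outgoing edge. Then every spoke is directed away from the hub (r h u holds for every rim vertex u, and r u h holds for no u), and the rim is a directed cycle: either r directs the rim edge from i to i+1 (mod n) for every rim vertex i, or r directs the rim edge from i+1 (mod n) to i for every rim vertex i. In particular, W_n has exactly two orientations with this property. -/
namespace Paper

/-- The wheel graph `W_n` on `Fin (n+1)`: the hub `Fin.last n` is adjacent to each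
of the `n` rim vertices, and two rim vertices are adjacent iff they differ by
`±1` modulo `n`. -/
def wheel (n : ℕ) : SimpleGraph (Fin (n + 1)) where
  Adj u v := u ≠ v ∧
    (u = Fin.last n ∨ v = Fin.last n ∨
      ((u : ℕ) + 1) % n = (v : ℕ) ∨ ((v : ℕ) + 1) % n = (u : ℕ))
  symm := by
    constructor
    intro u v hv
    refine ⟨hv.1.symm, ?_⟩
    tauto
  loopless := by
    constructor
    intro v hv
    exact hv.1 rfl

end Paper

namespace Paper

/-- The successor of a rim vertex: `i ↦ (i+1) mod n`. -/
def rimNext (n : ℕ) (i : Fin (n + 1)) : Fin (n + 1) :=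
  if hn : 0 < n then ⟨((i : ℕ) + 1) % n, Nat.lt_succ_of_lt (Nat.mod_lt _ hn)⟩ else i

/-- `r` is an orientation of the wheel graph `W_n`. -/
def isWheelOrientation (n : ℕ) (r : Fin (n + 1) → Fin (n + 1) → Prop) : Prop :=
  (∀ u v, (wheel n).Adj u v ↔ (r u v ∨ r v u)) ∧ ∀ u v, ¬ (r u v ∧ r v u)

/-- Every vertex other than the hub has at most one outgoing edge. -/
def atMostOneOut (n : ℕ) (r : Fin (n + 1) → Fin (n + 1) → Prop) : Prop :=
  ∀ u, u ≠ Fin.last n → ∀ v w, r u v → r u w → v = w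

/-- The "clockwise" orientation of the wheel: spokes away from the hub, rim edges
directed `i → i+1 (mod n)`. -/
def cw (n : ℕ) (u v : Fin (n + 1)) : Prop :=
  (u = Fin.last n ∧ v ≠ Fin.last n) ∨
    (u ≠ Fin.last n ∧ v ≠ Fin.last n ∧ v = rimNext n u)

/-- The "counterclockwise" orientation of the wheel: spokes away from the hub, rim
edges directed `i+1 (mod n) → i`. -/
def ccw (n : ℕ) (u v : Fin (n + 1)) : Prop :=
  (u = Fin.last n ∧ v ≠ Fin.last n) ∨
    (u ≠ Fin.last n ∧ v ≠ Fin.last n ∧ u = rimNext n v)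

end Paper

namespace Paper

section Aux
variable {n : ℕ} (hn : 3 ≤ n)

def rim (n : ℕ) (a : ℕ) : Fin (n + 1) := ⟨a % n % (n + 1), Nat.mod_lt _ n.succ_pos⟩

include hn

lemma rim_val (a : ℕ) : (rim n a : ℕ) = a % n := by
  have h1 : a % n < n := Nat.mod_lt _ (by omega)
  simp only [rim]
  exact Nat.mod_eq_of_lt (by omega)

lemma rim_ne_last (a : ℕ) : rim n a ≠ Fin.last n := by
  intro h
  have := congrArg Fin.val h
  rw [rim_val hn] at this
  simp only [Fin.val_last] at this
  have : a % n < n := Nat.mod_lt _ (by omega)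
  omega

lemma rim_eq_rim {a b : ℕ} (h : a % n = b % n) : rim n a = rim n b := by
  apply Fin.ext
  rw [rim_val hn, rim_val hn, h]

lemma rim_add_n (a : ℕ) : rim n (a + n) = rim n a :=
  rim_eq_rim hn (Nat.add_mod_right a n)

lemma rim_ne_rim {a k : ℕ} (hk : 0 < k) (hk2 : k < n) : rim n a ≠ rim n (a + k) := by
  intro h
  have := congrArg Fin.val h
  rw [rim_val hn, rim_val hn] at this
  have : n ∣ (a + k) - a := (Nat.modEq_iff_dvd' (by omega)).mp this
  rw [Nat.add_sub_cancel_left] at this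
  have := Nat.le_of_dvd hk this
  omega

lemma rim_eq_self {u : Fin (n + 1)} (hu : u ≠ Fin.last n) : rim n (u : ℕ) = u := by
  have h1 : (u : ℕ) < n + 1 := u.isLt
  have h2 : (u : ℕ) ≠ n := fun h => hu (Fin.ext h)
  apply Fin.ext
  rw [rim_val hn, Nat.mod_eq_of_lt (by omega)]

lemma rimNext_rim (a : ℕ) : rimNext n (rim n a) = rim n (a + 1) := by
  apply Fin.ext
  rw [rimNext, dif_pos (by omega : 0 < n)]
  show ((rim n a : ℕ) + 1) % n = _
  rw [rim_val hn, rim_val hn, Nat.mod_add_mod]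

lemma rimNext_val (i : Fin (n + 1)) : (rimNext n i : ℕ) = ((i : ℕ) + 1) % n := by
  rw [rimNext, dif_pos (by omega : 0 < n)]

lemma rimNext_ne_last (i : Fin (n + 1)) : rimNext n i ≠ Fin.last n := by
  intro h
  have := congrArg Fin.val h
  rw [rimNext_val hn] at this
  simp only [Fin.val_last] at this
  have : ((i : ℕ) + 1) % n < n := Nat.mod_lt _ (by omega)
  omega

lemma adj_hub_rim (a : ℕ) : (wheel n).Adj (Fin.last n) (rim n a) :=
  ⟨(rim_ne_last hn a).symm.symm.symm, Or.inl rfl⟩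

lemma adj_rim_succ (a : ℕ) : (wheel n).Adj (rim n a) (rim n (a + 1)) := by
  refine ⟨rim_ne_rim hn one_pos (by omega), Or.inr (Or.inr (Or.inl ?_))⟩
  rw [rim_val hn, rim_val hn, Nat.mod_add_mod]

theorem main (r : Fin (n + 1) → Fin (n + 1) → Prop)
    (hr : isWheelOrientation n r) (hout : atMostOneOut n r) :
    (∀ u, u ≠ Fin.last n → r (Fin.last n) u) ∧ (∀ u, ¬ r u (Fin.last n)) ∧
    ((∀ i, i ≠ Fin.last n → r i (rimNext n i)) ∨
      (∀ i, i ≠ Fin.last n → r (rimNext n i) i)) := by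
  obtain ⟨hadj, hasym⟩ := hr
  -- forced incoming: if a rim vertex already has an outgoing edge, all other edges come in
  have force : ∀ u v w, u ≠ Fin.last n → r u v → (wheel n).Adj u w → w ≠ v → r w u := by
    intro u v w hu huv ha hwv
    rcases (hadj u w).mp ha with h | h
    · exact absurd (hout u hu v w huv h).symm hwv
    · exact h
  -- no edge points at the hub
  have noup : ∀ u, ¬ r u (Fin.last n) := by
    intro u hu
    by_cases h : u = Fin.last n
    · subst h
      exact (wheel n).loopless.irrefl _ ((hadj _ _).mpr (Or.inl hu))
    · set a := (u : ℕ) with ha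
      have hu' : rim n a = u := rim_eq_self hn h
      have Q : ∀ k, r (rim n (a + k + 1)) (rim n (a + k)) := by
        intro k
        induction k with
        | zero =>
          have hb := force u (Fin.last n) (rim n (a + 1)) h hu
            (by rw [← hu']; exact adj_rim_succ hn a) (rim_ne_last hn _)
          simpa [hu'] using hb
        | succ k ih =>
          refine force (rim n (a + k + 1)) (rim n (a + k)) (rim n (a + k + 1 + 1))
            (rim_ne_last hn _) ih (adj_rim_succ hn _) ?_
          have : a + k + 1 + 1 = a + k + 2 := by omega
          rw [this]
          exact (rim_ne_rim hn (by omega : (0:ℕ) < 2) (by omega)).symm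
      have hq := Q (n - 1)
      have e1 : a + (n - 1) + 1 = a + n := by omega
      rw [e1, rim_add_n hn, hu'] at hq
      have := hout u h (Fin.last n) (rim n (a + (n - 1))) hu hq
      exact rim_ne_last hn _ this.symm
  refine ⟨?_, noup, ?_⟩
  · intro u hu
    rcases (hadj (Fin.last n) u).mp ⟨Ne.symm hu, Or.inl rfl⟩ with h | h
    · exact h
    · exact absurd h (noup u)
  · -- rim direction
    set d : ℕ → Prop := fun a => r (rim n a) (rim n (a + 1)) with hd
    have dich : ∀ a, d a ∨ r (rim n (a + 1)) (rim n a) := by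
      intro a
      exact (hadj _ _).mp (adj_rim_succ hn a)
    have step : ∀ a, ¬ d a → ¬ d (a + 1) := by
      intro a h1 h2
      have h3 : r (rim n (a + 1)) (rim n a) := (dich a).resolve_left h1
      have := hout (rim n (a + 1)) (rim_ne_last hn _) (rim n a) (rim n (a + 1 + 1)) h3 h2
      have e : a + 1 + 1 = a + 2 := by omega
      rw [e] at this
      exact rim_ne_rim hn (by omega : (0:ℕ) < 2) (by omega) this
    have steps : ∀ a m, ¬ d a → ¬ d (a + m) := by
      intro a m h
      induction m with
      | zero => exact h
      | succ m ih => exact (by rw [show a + (m+1) = a + m + 1 by omega]; exact step _ ih)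
    have dmod : ∀ a, d a ↔ d (a % n) := by
      intro a
      have e1 : rim n a = rim n (a % n) := rim_eq_rim hn (by simp)
      have e2 : rim n (a + 1) = rim n (a % n + 1) :=
        rim_eq_rim hn (by rw [Nat.mod_add_mod])
      simp only [hd]
      rw [e1, e2]
    have dshift : ∀ a, d (a + n) ↔ d a := by
      intro a
      simp only [hd]
      rw [rim_add_n hn, show a + n + 1 = a + 1 + n by omega, rim_add_n hn]
    by_cases hall : ∀ a, d a
    · left
      intro i hi
      have := hall (i : ℕ)
      simp only [hd] at this
      rwa [rim_eq_self hn hi, ← rimNext_rim hn, rim_eq_self hn hi] at this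
    · right
      push_neg at hall
      obtain ⟨a, hda⟩ := hall
      have hnone : ∀ b, ¬ d b := by
        intro b
        rw [dmod]
        have hda' : ¬ d (a % n) := (dmod a).not.mp hda
        have ha' : a % n < n := Nat.mod_lt _ (by omega)
        have hb' : b % n < n := Nat.mod_lt _ (by omega)
        by_cases hab : a % n ≤ b % n
        · have := steps (a % n) (b % n - a % n) hda'
          rwa [show a % n + (b % n - a % n) = b % n by omega] at this
        · have := steps (a % n) (b % n + n - a % n) hda'
          rw [show a % n + (b % n + n - a % n) = b % n + n by omega, dshift] at this
          exact this
      intro i hi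
      have h3 : r (rim n ((i : ℕ) + 1)) (rim n (i : ℕ)) := (dich (i : ℕ)).resolve_left (hnone _)
      rwa [rim_eq_self hn hi, ← rimNext_rim hn, rim_eq_self hn hi] at h3

lemma rimNext_ne {i : Fin (n + 1)} (hi : i ≠ Fin.last n) : rimNext n i ≠ i := by
  intro h
  have e := congrArg Fin.val h
  rw [rimNext_val hn] at e
  have hi' : (i : ℕ) < n := by
    have h1 := i.isLt
    have h2 : (i : ℕ) ≠ n := fun h' => hi (Fin.ext h')
    omega
  by_cases hc : (i : ℕ) + 1 < n
  · rw [Nat.mod_eq_of_lt hc] at e; omega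
  · have hb : (i : ℕ) + 1 = n := by omega
    rw [hb, Nat.mod_self] at e
    omega

lemma not_both_rimNext {u v : Fin (n + 1)} (hu : u ≠ Fin.last n) (hv : v ≠ Fin.last n) :
    ¬ (v = rimNext n u ∧ u = rimNext n v) := by
  rintro ⟨h1, h2⟩
  have e1 := congrArg Fin.val h1
  rw [rimNext_val hn] at e1
  have e2 := congrArg Fin.val h2
  rw [rimNext_val hn] at e2
  have hu' : (u : ℕ) < n := by
    have h3 := u.isLt
    have h4 : (u : ℕ) ≠ n := fun h' => hu (Fin.ext h')
    omega
  rw [e1, Nat.mod_add_mod, show (u:ℕ) + 1 + 1 = (u:ℕ) + 2 by omega] at e2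
  have e3 : (u : ℕ) % n = ((u:ℕ) + 2) % n := by
    rw [Nat.mod_eq_of_lt hu']; exact e2
  have e4 : n ∣ ((u:ℕ) + 2) - (u:ℕ) := (Nat.modEq_iff_dvd' (by omega)).mp e3
  rw [show (u:ℕ) + 2 - (u:ℕ) = 2 by omega] at e4
  have := Nat.le_of_dvd (by omega) e4
  omega

lemma rimNext_inj {u v w : Fin (n + 1)} (hv : v ≠ Fin.last n) (hw : w ≠ Fin.last n)
    (h1 : u = rimNext n v) (h2 : u = rimNext n w) : v = w := by
  have e : ((v : ℕ) + 1) % n = ((w : ℕ) + 1) % n := by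
    rw [← rimNext_val hn, ← rimNext_val hn, ← h1, ← h2]
  have e2 : (v : ℕ) % n = (w : ℕ) % n := Nat.ModEq.add_right_cancel' 1 e
  have hv' : (v : ℕ) < n := by
    have := v.isLt; have : (v : ℕ) ≠ n := fun h => hv (Fin.ext h); omega
  have hw' : (w : ℕ) < n := by
    have := w.isLt; have : (w : ℕ) ≠ n := fun h => hw (Fin.ext h); omega
  rw [Nat.mod_eq_of_lt hv', Nat.mod_eq_of_lt hw'] at e2
  exact Fin.ext e2

lemma cw_adj {u v : Fin (n + 1)} (h : cw n u v) : (wheel n).Adj u v := by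
  rcases h with ⟨hu, hv⟩ | ⟨hu, hv, he⟩
  · exact ⟨by rintro rfl; exact hv hu, Or.inl hu⟩
  · refine ⟨fun e => rimNext_ne hn hu (he ▸ e.symm), Or.inr (Or.inr (Or.inl ?_))⟩
    rw [he, rimNext_val hn]

lemma ccw_adj {u v : Fin (n + 1)} (h : ccw n u v) : (wheel n).Adj u v := by
  rcases h with ⟨hu, hv⟩ | ⟨hu, hv, he⟩
  · exact ⟨by rintro rfl; exact hv hu, Or.inl hu⟩
  · refine ⟨fun e => rimNext_ne hn hv (he ▸ e), Or.inr (Or.inr (Or.inr ?_))⟩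
    rw [he, rimNext_val hn]

lemma adj_cases {u v : Fin (n + 1)} (h : (wheel n).Adj u v) (hu : u ≠ Fin.last n)
    (hv : v ≠ Fin.last n) : v = rimNext n u ∨ u = rimNext n v := by
  rcases h.2 with e | e | e | e
  · exact absurd e hu
  · exact absurd e hv
  · exact Or.inl (Fin.ext (by rw [rimNext_val hn]; exact e.symm))
  · exact Or.inr (Fin.ext (by rw [rimNext_val hn]; exact e.symm))

lemma cw_ok : isWheelOrientation n (cw n) ∧ atMostOneOut n (cw n) := by
  refine ⟨⟨?_, ?_⟩, ?_⟩
  · intro u v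
    constructor
    · intro h
      by_cases hu : u = Fin.last n
      · exact Or.inl (Or.inl ⟨hu, fun hv => h.1 (hu.trans hv.symm)⟩)
      · by_cases hv : v = Fin.last n
        · exact Or.inr (Or.inl ⟨hv, hu⟩)
        · rcases adj_cases hn h hu hv with e | e
          · exact Or.inl (Or.inr ⟨hu, hv, e⟩)
          · exact Or.inr (Or.inr ⟨hv, hu, e⟩)
    · rintro (h | h)
      · exact cw_adj hn h
      · exact (cw_adj hn h).symm
  · rintro u v ⟨h1, h2⟩
    rcases h1 with ⟨hu, hv⟩ | ⟨hu, hv, he⟩ <;> rcases h2 with ⟨hv2, hu2⟩ | ⟨hv2, hu2, he2⟩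
    · exact hv hv2
    · exact hu2 hu
    · exact hv hv2
    · exact not_both_rimNext hn hu hv ⟨he, he2⟩
  · intro u hu v w h1 h2
    rcases h1 with ⟨hu', _⟩ | ⟨_, _, he1⟩
    · exact absurd hu' hu
    · rcases h2 with ⟨hu', _⟩ | ⟨_, _, he2⟩
      · exact absurd hu' hu
      · exact he1.trans he2.symm

lemma ccw_ok : isWheelOrientation n (ccw n) ∧ atMostOneOut n (ccw n) := by
  refine ⟨⟨?_, ?_⟩, ?_⟩
  · intro u v
    constructor
    · intro h
      by_cases hu : u = Fin.last n
      · exact Or.inl (Or.inl ⟨hu, fun hv => h.1 (hu.trans hv.symm)⟩)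
      · by_cases hv : v = Fin.last n
        · exact Or.inr (Or.inl ⟨hv, hu⟩)
        · rcases adj_cases hn h hu hv with e | e
          · exact Or.inr (Or.inr ⟨hv, hu, e⟩)
          · exact Or.inl (Or.inr ⟨hu, hv, e⟩)
    · rintro (h | h)
      · exact ccw_adj hn h
      · exact (ccw_adj hn h).symm
  · rintro u v ⟨h1, h2⟩
    rcases h1 with ⟨hu, hv⟩ | ⟨hu, hv, he⟩ <;> rcases h2 with ⟨hv2, hu2⟩ | ⟨hv2, hu2, he2⟩
    · exact hv hv2
    · exact hu2 hu
    · exact hv hv2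
    · exact not_both_rimNext hn hu hv ⟨he2, he⟩
  · intro u hu v w h1 h2
    rcases h1 with ⟨hu', _⟩ | ⟨_, hv1, he1⟩
    · exact absurd hu' hu
    · rcases h2 with ⟨hu', _⟩ | ⟨_, hv2, he2⟩
      · exact absurd hu' hu
      · exact rimNext_inj hn hv1 hv2 he1 he2

lemma cw_ne_ccw : ¬ ∀ u v, cw n u v ↔ ccw n u v := by
  intro h
  have hcw : cw n (rim n 0) (rim n 1) :=
    Or.inr ⟨rim_ne_last hn 0, rim_ne_last hn 1, (rimNext_rim hn 0).symm⟩
  have hccw := (h _ _).mp hcw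
  rcases hccw with ⟨h0, _⟩ | ⟨_, _, he⟩
  · exact rim_ne_last hn 0 h0
  · rw [rimNext_rim hn] at he
    have : rim n 0 = rim n (0 + 2) := he
    exact rim_ne_rim hn (by omega : (0:ℕ) < 2) (by omega) this

lemma unique (r' : Fin (n + 1) → Fin (n + 1) → Prop)
    (hr' : isWheelOrientation n r') (hout' : atMostOneOut n r') :
    (∀ u v, r' u v ↔ cw n u v) ∨ (∀ u v, r' u v ↔ ccw n u v) := by
  obtain ⟨hspoke, hnoup, hrim⟩ := main hn r' hr' hout'
  rcases hrim with hfor | hback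
  · left
    intro u v
    constructor
    · intro h
      have ha : (wheel n).Adj u v := (hr'.1 u v).mpr (Or.inl h)
      by_cases hu : u = Fin.last n
      · exact Or.inl ⟨hu, fun hv => hnoup u (hv ▸ h)⟩
      · have hv : v ≠ Fin.last n := fun hv => hnoup u (hv ▸ h)
        rcases adj_cases hn ha hu hv with e | e
        · exact Or.inr ⟨hu, hv, e⟩
        · exfalso
          have h2 := hfor v hv
          rw [← e] at h2
          exact hr'.2 u v ⟨h, h2⟩
    · rintro (⟨hu, hv⟩ | ⟨hu, hv, he⟩)
      · exact hu ▸ hspoke v hv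
      · exact he ▸ hfor u hu
  · right
    intro u v
    constructor
    · intro h
      have ha : (wheel n).Adj u v := (hr'.1 u v).mpr (Or.inl h)
      by_cases hu : u = Fin.last n
      · exact Or.inl ⟨hu, fun hv => hnoup u (hv ▸ h)⟩
      · have hv : v ≠ Fin.last n := fun hv => hnoup u (hv ▸ h)
        rcases adj_cases hn ha hu hv with e | e
        · exfalso
          have h2 := hback u hu
          rw [← e] at h2
          exact hr'.2 u v ⟨h, h2⟩
        · exact Or.inr ⟨hu, hv, e⟩
    · rintro (⟨hu, hv⟩ | ⟨hu, hv, he⟩)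
      · exact hu ▸ hspoke v hv
      · exact he ▸ hback v hv

end Aux
end Paper

/-- For `n ≥ 3`, in any orientation of the wheel `W_n` in which
every vertex other than the hub has at most one outgoing edge, every spoke is
directed away from the hub and the rim is a directed cycle (one of the two
rotational directions). In particular, `W_n` has exactly two orientations with
this property. -/
theorem statement17 (n : ℕ) (hn : 3 ≤ n)
    (r : Fin (n + 1) → Fin (n + 1) → Prop)
    (hr : Paper.isWheelOrientation n r)
    (hout : Paper.atMostOneOut n r) :
    ((∀ u, u ≠ Fin.last n → r (Fin.last n) u) ∧
      (∀ u, ¬ r u (Fin.last n)) ∧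
      ((∀ i, i ≠ Fin.last n → r i (Paper.rimNext n i)) ∨
        (∀ i, i ≠ Fin.last n → r (Paper.rimNext n i) i))) ∧
    (Paper.isWheelOrientation n (Paper.cw n) ∧ Paper.atMostOneOut n (Paper.cw n)) ∧
    (Paper.isWheelOrientation n (Paper.ccw n) ∧ Paper.atMostOneOut n (Paper.ccw n)) ∧
    (¬ ∀ u v, Paper.cw n u v ↔ Paper.ccw n u v) ∧
    (∀ r' : Fin (n + 1) → Fin (n + 1) → Prop,
      Paper.isWheelOrientation n r' → Paper.atMostOneOut n r' →
        (∀ u v, r' u v ↔ Paper.cw n u v) ∨ (∀ u v, r' u v ↔ Paper.ccw n u v)) :=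
  ⟨Paper.main hn r hr hout, Paper.cw_ok hn, Paper.ccw_ok hn, Paper.cw_ne_ccw hn,
    Paper.unique hn⟩
end
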